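/- Let A = [a_1, …, a_K] be an M×K complex matrix with columns a_k, let P = diag(p_1, …, p_K) with p_k > 0 for all k, and let σ > 0. Then the matrix A P A^H + σ I is Hermitian positive definite, and for every k ∈ {1, …, K} the (real) quadratic form satisfies a_k^H (A P A^H + σ I)^{-1} a_k < p_k^{-1}. (Lemma 1, first part.) -/

import Mathlib

open Matrix
open scoped ComplexOrder

/-- For `A` an `M × K` complex matrix, `P = diag p` with `p k > 0`, and `σ > 0`,
the matrix `A P Aᴴ + σ I` is Hermitian positive definite, and for every column `a_k` of `A`,
`a_kᴴ (A P Aᴴ + σ I)⁻¹ a_k < (p k)⁻¹`. -/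
theorem stmt0 {M K : ℕ} (A : Matrix (Fin M) (Fin K) ℂ) (p : Fin K → ℝ)
    (hp : ∀ k, 0 < p k) (σ : ℝ) (hσ : 0 < σ) :
    (A * Matrix.diagonal (fun k => (p k : ℂ)) * Aᴴ + (σ : ℂ) • (1 : Matrix (Fin M) (Fin M) ℂ)).PosDef ∧
    ∀ k : Fin K,
      (star (fun i => A i k) ⬝ᵥ
        ((A * Matrix.diagonal (fun k => (p k : ℂ)) * Aᴴ + (σ : ℂ) • (1 : Matrix (Fin M) (Fin M) ℂ))⁻¹
          *ᵥ (fun i => A i k))).re < (p k)⁻¹ := by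
  set D : Matrix (Fin K) (Fin K) ℂ := Matrix.diagonal (fun k => (p k : ℂ)) with hD
  set R : Matrix (Fin M) (Fin M) ℂ :=
    A * D * Aᴴ + (σ : ℂ) • (1 : Matrix (Fin M) (Fin M) ℂ) with hRdef
  have hPSD : (A * D * Aᴴ).PosSemidef := by
    refine (Matrix.PosSemidef.diagonal ?_).mul_mul_conjTranspose_same A
    intro k
    simp only [Pi.zero_apply]
    exact_mod_cast (hp k).le
  have hσ1 : ((σ : ℂ) • (1 : Matrix (Fin M) (Fin M) ℂ)).PosDef := by
    rw [smul_one_eq_diagonal]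
    refine Matrix.posDef_diagonal_iff.mpr fun i => ?_
    exact_mod_cast hσ
  have hR : R.PosDef := Matrix.PosDef.posSemidef_add hPSD hσ1
  refine ⟨hR, fun k => ?_⟩
  set a : Fin M → ℂ := fun i => A i k with ha
  set x : Fin M → ℂ := R⁻¹ *ᵥ a with hxdef
  have hRx : R *ᵥ x = a := by
    rw [hxdef, Matrix.mulVec_mulVec, Matrix.mul_nonsing_inv _ hR.det_pos.ne'.isUnit,
      Matrix.one_mulVec]
  by_cases hx0 : x = 0
  · rw [hx0]
    simp only [dotProduct_zero, Complex.zero_re]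
    exact inv_pos.mpr (hp k)
  · set E : ℂ := star x ⬝ᵥ (R *ᵥ x) with hEdef
    have hEpos : 0 < E := hR.dotProduct_mulVec_pos hx0
    have hEre : 0 < E.re := (Complex.lt_def.mp hEpos).1
    have hEim : E.im = 0 := (Complex.lt_def.mp hEpos).2.symm
    have hEa : E = star x ⬝ᵥ a := by rw [hEdef, hRx]
    have hconj : star a ⬝ᵥ x = star E := by
      rw [Matrix.star_dotProduct, ← hEa]
    set y : Fin K → ℂ := Aᴴ *ᵥ x with hydef
    have hyk : y k = star a ⬝ᵥ x := by
      simp [hydef, Matrix.mulVec, dotProduct, Matrix.conjTranspose_apply, ha]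
    have hE : E = star y ⬝ᵥ (D *ᵥ y) + (σ : ℂ) * (star x ⬝ᵥ x) := by
      have h1 : star x ⬝ᵥ ((A * D * Aᴴ) *ᵥ x) = star y ⬝ᵥ (D *ᵥ y) := by
        have h2 : star y = star x ᵥ* A := by
          ext j
          simp [hydef, Matrix.mulVec, Matrix.vecMul, dotProduct, Finset.sum_apply,
            map_sum, mul_comm]
        rw [← Matrix.mulVec_mulVec, ← Matrix.mulVec_mulVec, Matrix.dotProduct_mulVec, h2]
      rw [hEdef, hRdef, Matrix.add_mulVec, dotProduct_add, h1,
        Matrix.smul_mulVec, Matrix.one_mulVec, dotProduct_smul, smul_eq_mul]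
    have hDy : star y ⬝ᵥ (D *ᵥ y) = ((∑ j, p j * Complex.normSq (y j) : ℝ) : ℂ) := by
      push_cast
      simp only [dotProduct, Matrix.mulVec_diagonal, hD, Pi.star_apply]
      refine Finset.sum_congr rfl fun j _ => ?_
      simp only [Complex.star_def, Complex.normSq_eq_conj_mul_self]
      ring
    have hxx : star x ⬝ᵥ x = ((∑ i, Complex.normSq (x i) : ℝ) : ℂ) := by
      push_cast
      simp only [dotProduct, Pi.star_apply]
      refine Finset.sum_congr rfl fun i _ => ?_
      simp only [Complex.star_def, Complex.normSq_eq_conj_mul_self]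
    have hre : E.re = (∑ j, p j * Complex.normSq (y j)) + σ * ∑ i, Complex.normSq (x i) := by
      rw [hE, hDy, hxx]
      simp [← Complex.ofReal_mul, ← Complex.ofReal_add]
    have hs2 : 0 < ∑ i, Complex.normSq (x i) := by
      obtain ⟨i, hi⟩ := Function.ne_iff.mp hx0
      exact Finset.sum_pos' (fun i _ => Complex.normSq_nonneg _)
        ⟨i, Finset.mem_univ i, Complex.normSq_pos.mpr hi⟩
    have hyE : y k = star E := by rw [hyk, hconj]
    have hnsq : Complex.normSq (y k) = E.re ^ 2 := by
      rw [hyE, Complex.star_def, Complex.normSq_conj, Complex.normSq_apply, hEim]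
      ring
    have hSy : p k * E.re ^ 2 ≤ ∑ j, p j * Complex.normSq (y j) := by
      rw [← hnsq]
      exact Finset.single_le_sum (f := fun j => p j * Complex.normSq (y j)) (fun j _ => mul_nonneg (hp j).le (Complex.normSq_nonneg _)) (Finset.mem_univ k)
    have hkey : p k * E.re ^ 2 < E.re := by nlinarith
    have hgoal : E.re < (p k)⁻¹ := by
      nlinarith [mul_inv_cancel₀ (hp k).ne', inv_pos.mpr (hp k)]
    rw [hconj]
    simpa using hgoal
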